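/- Let M be a non-associative free Moufang loop and F a field. Then the quotient FM/I(M) of the loop algebra FM by the ideal I(M) is an alternative algebra with unit. -/

import Mathlib

/-- A loop: a pointed magma with two-sided identity in which both division
equations `a * x = b` and `y * a = b` are uniquely solvable. -/
class MulLoop (L : Type*) extends MulOneClass L where
  existsUnique_left : ∀ a b : L, ∃! x : L, a * x = b
  existsUnique_right : ∀ a b : L, ∃! y : L, y * a = b

/-- A Moufang loop: a loop satisfying the Moufang identity `x(y·zy) = (xy·z)y`. -/
class MoufangLoop (M : Type*) extends MulLoop M where
  moufang : ∀ x y z : M, x * (y * (z * y)) = ((x * y) * z) * y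

/-- The associator `(a,b,c) = (ab)c - a(bc)` of loop elements,
inside the (nonassociative) loop algebra `FM`. -/
noncomputable def loopAssociator (F : Type*) [Field F] {M : Type*} [MulLoop M]
    (a b c : M) : MonoidAlgebra F M :=
  (MonoidAlgebra.of F M a * MonoidAlgebra.of F M b) * MonoidAlgebra.of F M c
    - MonoidAlgebra.of F M a * (MonoidAlgebra.of F M b * MonoidAlgebra.of F M c)

/-- `I(M)`: the two-sided ideal of `FM` generated by all elements
`(a,b,c) + (b,a,c)` and `(a,b,c) + (a,c,b)` with `a, b, c ∈ M`. -/
noncomputable def assocIdeal (F : Type*) [Field F] (M : Type*) [MulLoop M] :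
    TwoSidedIdeal (MonoidAlgebra F M) :=
  TwoSidedIdeal.span
    ({x | ∃ a b c : M, x = loopAssociator F a b c + loopAssociator F b a c} ∪
     {x | ∃ a b c : M, x = loopAssociator F a b c + loopAssociator F a c b})

namespace MoufangLoop

variable {M : Type*} [MoufangLoop M]

lemma left_cancel {a x y : M} (h : a * x = a * y) : x = y :=
  (MulLoop.existsUnique_left a (a * y)).unique h rfl

lemma right_cancel {a x y : M} (h : x * a = y * a) : x = y :=
  (MulLoop.existsUnique_right a (y * a)).unique h rfl

lemma exists_rdiv (a b : M) : ∃ z : M, z * a = b := (MulLoop.existsUnique_right a b).exists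

lemma exists_ldiv (a b : M) : ∃ z : M, a * z = b := (MulLoop.existsUnique_left a b).exists

lemma flex (y z : M) : y * (z * y) = (y * z) * y := by
  have := moufang (1 : M) y z; simpa using this

lemma ralt (x y : M) : x * (y * y) = (x * y) * y := by
  have := moufang x y (1 : M); simpa using this

noncomputable def linv (y : M) : M := (MulLoop.existsUnique_right y 1).exists.choose

lemma linv_mul (y : M) : linv y * y = 1 := (MulLoop.existsUnique_right y 1).exists.choose_spec

lemma linv_mul_cancel (y w : M) : linv y * (y * w) = w := by
  obtain ⟨z, rfl⟩ := exists_rdiv y w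
  have h := moufang (linv y) y z
  rwa [linv_mul, one_mul] at h

lemma mul_linv_cancel (y w : M) : y * (linv y * w) = w := by
  obtain ⟨t, rfl⟩ := exists_ldiv y w
  rw [linv_mul_cancel]

lemma rip (w y : M) : (w * y) * linv y = w := by
  have h := moufang w y (linv y)
  rw [linv_mul, mul_one] at h
  exact right_cancel h.symm

lemma eq_linv {t y : M} (h : t * y = 1) : t = linv y :=
  (MulLoop.existsUnique_right y 1).unique h (linv_mul y)

lemma linv_mul_rev (x y : M) : linv (x * y) = linv y * linv x := by
  have h1 : linv x * (x * y) = y := linv_mul_cancel x y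
  have h2 : y * linv (x * y) = linv x := by
    have := rip (linv x) (x * y); rwa [h1] at this
  have := linv_mul_cancel y (linv (x * y))
  rw [h2] at this; exact this.symm

lemma linv_inj {u v : M} (h : linv u = linv v) : u = v := by
  apply left_cancel (a := linv u)
  rw [linv_mul, h, linv_mul]

lemma lalt (a b : M) : a * (a * b) = (a * a) * b := by
  apply linv_inj
  rw [linv_mul_rev, linv_mul_rev, linv_mul_rev, linv_mul_rev, ← ralt]

end MoufangLoop

section Alg

variable (F : Type) [Field F] (M : Type) [MoufangLoop M]

open MonoidAlgebra MoufangLoop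

/-- induction principle for `MonoidAlgebra` over a `MulOneClass`. -/
lemma MA.induction_on {p : MonoidAlgebra F M → Prop} (f : MonoidAlgebra F M)
    (h0 : p 0) (hM : ∀ g : M, p (of F M g))
    (hadd : ∀ f g : MonoidAlgebra F M, p f → p g → p (f + g))
    (hsmul : ∀ (r : F) (f : MonoidAlgebra F M), p f → p (r • f)) : p f := by
  refine MonoidAlgebra.induction_linear (motive := p) f h0 (fun f g hf hg => hadd f g hf hg) fun g r => ?_
  have := hsmul r (of F M g) (hM g)
  rwa [MonoidAlgebra.smul_of] at this

variable {F M}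

lemma Jsmul (r : F) {x : MonoidAlgebra F M} (h : x ∈ assocIdeal F M) :
    r • x ∈ assocIdeal F M := by
  have hx : r • x = (r • (1 : MonoidAlgebra F M)) * x := by
    rw [smul_mul_assoc, one_mul]
  rw [hx]
  exact (assocIdeal F M).mul_mem_left _ _ h

lemma gen1 (a b c : M) :
    loopAssociator F a b c + loopAssociator F b a c ∈ assocIdeal F M :=
  TwoSidedIdeal.subset_span (Or.inl ⟨a, b, c, rfl⟩)

lemma gen2 (a b c : M) :
    loopAssociator F a b c + loopAssociator F a c b ∈ assocIdeal F M :=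
  TwoSidedIdeal.subset_span (Or.inr ⟨a, b, c, rfl⟩)

/-- symmetrized associator in the first two arguments lies in the ideal. -/
lemma sym12_mem : ∀ p q r : MonoidAlgebra F M,
    ((p * q) * r - p * (q * r)) + ((q * p) * r - q * (p * r)) ∈ assocIdeal F M := by
  intro p
  induction p using MA.induction_on with
  | h0 => intro q r; simpa using (assocIdeal F M).zero_mem
  | hadd p p' ihp ihp' =>
    intro q r
    have h := (assocIdeal F M).add_mem (ihp q r) (ihp' q r)
    convert h using 1
    simp only [add_mul, mul_add]
    abel
  | hsmul c p ihp =>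
    intro q r
    have h := Jsmul c (ihp q r)
    convert h using 1
    simp only [smul_mul_assoc, mul_smul_comm, smul_add, smul_sub]
  | hM a =>
    intro q
    induction q using MA.induction_on with
    | h0 => intro r; simpa using (assocIdeal F M).zero_mem
    | hadd q q' ihq ihq' =>
      intro r
      have h := (assocIdeal F M).add_mem (ihq r) (ihq' r)
      convert h using 1
      simp only [add_mul, mul_add]
      abel
    | hsmul c q ihq =>
      intro r
      have h := Jsmul c (ihq r)
      convert h using 1
      simp only [smul_mul_assoc, mul_smul_comm, smul_add, smul_sub]
    | hM b =>
      intro r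
      induction r using MA.induction_on with
      | h0 => simpa using (assocIdeal F M).zero_mem
      | hadd r r' ihr ihr' =>
        have h := (assocIdeal F M).add_mem ihr ihr'
        convert h using 1
        simp only [add_mul, mul_add]
        abel
      | hsmul c r ihr =>
        have h := Jsmul c ihr
        convert h using 1
        simp only [smul_mul_assoc, mul_smul_comm, smul_add, smul_sub]
      | hM c => simpa [loopAssociator] using gen1 (F := F) a b c

/-- symmetrized associator in the last two arguments lies in the ideal. -/
lemma sym23_mem : ∀ p q r : MonoidAlgebra F M,
    ((p * q) * r - p * (q * r)) + ((p * r) * q - p * (r * q)) ∈ assocIdeal F M := by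
  intro p
  induction p using MA.induction_on with
  | h0 => intro q r; simpa using (assocIdeal F M).zero_mem
  | hadd p p' ihp ihp' =>
    intro q r
    have h := (assocIdeal F M).add_mem (ihp q r) (ihp' q r)
    convert h using 1
    simp only [add_mul, mul_add]
    abel
  | hsmul c p ihp =>
    intro q r
    have h := Jsmul c (ihp q r)
    convert h using 1
    simp only [smul_mul_assoc, mul_smul_comm, smul_add, smul_sub]
  | hM a =>
    intro q
    induction q using MA.induction_on with
    | h0 => intro r; simpa using (assocIdeal F M).zero_mem
    | hadd q q' ihq ihq' =>
      intro r
      have h := (assocIdeal F M).add_mem (ihq r) (ihq' r)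
      convert h using 1
      simp only [add_mul, mul_add]
      abel
    | hsmul c q ihq =>
      intro r
      have h := Jsmul c (ihq r)
      convert h using 1
      simp only [smul_mul_assoc, mul_smul_comm, smul_add, smul_sub]
    | hM b =>
      intro r
      induction r using MA.induction_on with
      | h0 => simpa using (assocIdeal F M).zero_mem
      | hadd r r' ihr ihr' =>
        have h := (assocIdeal F M).add_mem ihr ihr'
        convert h using 1
        simp only [add_mul, mul_add]
        abel
      | hsmul c r ihr =>
        have h := Jsmul c ihr
        convert h using 1
        simp only [smul_mul_assoc, mul_smul_comm, smul_add, smul_sub]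
      | hM c => simpa [loopAssociator] using gen2 (F := F) a b c

lemma of_sq_mul (a : M) (r : MonoidAlgebra F M) :
    of F M (a * a) * r = of F M a * (of F M a * r) := by
  induction r using MA.induction_on with
  | h0 => simp
  | hM c => simp [← map_mul, lalt]
  | hadd r r' ih ih' => simp only [mul_add, ih, ih']
  | hsmul c r ih => simp only [mul_smul_comm, ih]

lemma mul_of_sq (a : M) (r : MonoidAlgebra F M) :
    r * of F M (a * a) = (r * of F M a) * of F M a := by
  induction r using MA.induction_on with
  | h0 => simp
  | hM c => simp [← map_mul, ralt]
  | hadd r r' ih ih' => simp only [add_mul, ih, ih']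
  | hsmul c r ih => simp only [smul_mul_assoc, ih]

lemma leftalt_mem : ∀ p r : MonoidAlgebra F M,
    (p * p) * r - p * (p * r) ∈ assocIdeal F M := by
  intro p
  induction p using MA.induction_on with
  | h0 => intro r; simpa using (assocIdeal F M).zero_mem
  | hM a =>
    intro r
    have : (of F M a * of F M a) * r - of F M a * (of F M a * r) = 0 := by
      rw [← map_mul, of_sq_mul, sub_self]
    rw [this]
    exact (assocIdeal F M).zero_mem
  | hadd p p' ihp ihp' =>
    intro r
    have h := (assocIdeal F M).add_mem
      ((assocIdeal F M).add_mem (ihp r) (ihp' r)) (sym12_mem p p' r)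
    convert h using 1
    simp only [add_mul, mul_add]
    abel
  | hsmul c p ihp =>
    intro r
    have h := Jsmul c (Jsmul c (ihp r))
    convert h using 1
    simp only [smul_mul_assoc, mul_smul_comm, smul_sub, smul_smul]

lemma rightalt_mem : ∀ p r : MonoidAlgebra F M,
    (r * p) * p - r * (p * p) ∈ assocIdeal F M := by
  intro p
  induction p using MA.induction_on with
  | h0 => intro r; simpa using (assocIdeal F M).zero_mem
  | hM a =>
    intro r
    have : (r * of F M a) * of F M a - r * (of F M a * of F M a) = 0 := by
      rw [← map_mul, mul_of_sq, sub_self]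
    rw [this]
    exact (assocIdeal F M).zero_mem
  | hadd p p' ihp ihp' =>
    intro r
    have h := (assocIdeal F M).add_mem
      ((assocIdeal F M).add_mem (ihp r) (ihp' r)) (sym23_mem r p p')
    convert h using 1
    simp only [add_mul, mul_add]
    abel
  | hsmul c p ihp =>
    intro r
    have h := Jsmul c (Jsmul c (ihp r))
    convert h using 1
    simp only [smul_mul_assoc, mul_smul_comm, smul_sub, smul_smul]

end Alg

/-- **Statement 9.** Let `M` be a non-associative free Moufang loop (a free
object on generators `x : X → M` in the variety of Moufang loops) and `F` a
field.  Then the quotient `FM/I(M)` of the loop algebra `FM` by the ideal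
`I(M)` is an alternative algebra with unit. -/
theorem stmt_9 {F : Type} [Field F] {X : Type} {M : Type} [MoufangLoop M]
    (x : X → M)
    (hfree : ∀ (N : Type) [MoufangLoop N] (f : X → N),
      ∃! g : M → N, (∀ a b : M, g (a * b) = g a * g b) ∧ ∀ i : X, g (x i) = f i)
    (hna : ∃ a b c : M, (a * b) * c ≠ a * (b * c)) :
    (∀ u v : (assocIdeal F M).ringCon.Quotient,
      (u * u) * v = u * (u * v) ∧ (v * u) * u = v * (u * u)) ∧
    (∀ u : (assocIdeal F M).ringCon.Quotient, 1 * u = u ∧ u * 1 = u) := by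
  constructor
  · intro u v
    obtain ⟨p, rfl⟩ := Quotient.exists_rep u
    obtain ⟨q, rfl⟩ := Quotient.exists_rep v
    constructor
    · have e1 : ((p : (assocIdeal F M).ringCon.Quotient) * p) * q = p * (p * q) := by
        rw [← RingCon.coe_mul, ← RingCon.coe_mul, ← RingCon.coe_mul, ← RingCon.coe_mul,
          RingCon.eq, TwoSidedIdeal.rel_iff]
        exact leftalt_mem p q
      exact e1
    · have e2 : ((q : (assocIdeal F M).ringCon.Quotient) * p) * p = q * (p * p) := by
        rw [← RingCon.coe_mul, ← RingCon.coe_mul, ← RingCon.coe_mul, ← RingCon.coe_mul,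
          RingCon.eq, TwoSidedIdeal.rel_iff]
        exact rightalt_mem p q
      exact e2
  · exact fun u => ⟨one_mul u, mul_one u⟩
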